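/- Let F be a reversible cellular automaton, u a finite word, and suppose the set of positive consequences Cons_F^+([u]_0) ⊆ ℤ×ℕ contains a line D of rational slope, i.e., a set of sites {⟨x₀ + na, t₀ + nb⟩ : n ∈ ℕ} for integers a, b with b ≥ 1. Then the full bi-infinite line {⟨x₀ + na, t₀ + nb⟩ : n ∈ ℤ} is contained in the two-sided consequences Cons_F^±([u]_0) ⊆ ℤ×ℤ (negative times included). -/

import Mathlib

open Classical

section Prelude

variable {A : Type*}

/-- The shift map on configurations. -/
def shift (x : ℤ → A) : ℤ → A := fun i => x (i + 1)

/-- The cylinder of the word `u` placed at position `p`. -/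
def cylAt (u : List A) (p : ℤ) : Set (ℤ → A) :=
  {x | ∀ i : Fin u.length, x (p + ((i : ℕ) : ℤ)) = u.get i}

/-- The region of consequences of a set of configurations. -/
def consSet (F : (ℤ → A) → (ℤ → A)) (X : Set (ℤ → A)) : Set (ℤ × ℕ) :=
  {q | ∀ x ∈ X, ∀ y ∈ X, F^[q.2] x q.1 = F^[q.2] y q.1}

/-- `F` is a cellular automaton with neighborhood `⟦r,s⟧`. -/
def IsCA (F : (ℤ → A) → (ℤ → A)) (r s : ℤ) : Prop :=
  (∀ x, F (shift x) = shift (F x)) ∧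
  (∀ x y : ℤ → A, (∀ i : ℤ, r ≤ i → i ≤ s → x i = y i) → F x 0 = F y 0)

/-- A subshift: a closed shift-invariant set. -/
def IsSubshift [TopologicalSpace A] (S : Set (ℤ → A)) : Prop :=
  IsClosed S ∧ shift '' S = S

/-- Two configurations agree on the centered window of radius `m`
(Cantor distance `< 2^{-m}`). -/
def close (m : ℕ) (x y : ℤ → A) : Prop := ∀ i : ℤ, |i| ≤ (m : ℤ) → x i = y i

/-- `y` is in the tube of radius `2^{-k}` along `h` around `x`:
for every time `n` the configurations `σ^{h n} ∘ F^n (x)` and `σ^{h n} ∘ F^n (y)`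
agree on the window of radius `k`. -/
def tube (F : (ℤ → A) → (ℤ → A)) (h : ℕ → ℤ) (k : ℕ) (x y : ℤ → A) : Prop :=
  ∀ n : ℕ, ∀ i : ℤ, |i| ≤ (k : ℤ) → F^[n] x (i + h n) = F^[n] y (i + h n)

/-- `x` is an equicontinuous point along `h` relative to `S`. -/
def eqPt (F : (ℤ → A) → (ℤ → A)) (S : Set (ℤ → A)) (h : ℕ → ℤ) (x : ℤ → A) : Prop :=
  ∀ k : ℕ, ∃ m : ℕ, ∀ y ∈ S, close m x y → tube F h k x y

/-- `F` is sensitive along `h` relative to `S`. -/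
def sensitive (F : (ℤ → A) → (ℤ → A)) (S : Set (ℤ → A)) (h : ℕ → ℤ) : Prop :=
  ∃ k : ℕ, ∀ m : ℕ, ∀ x ∈ S, ∃ y ∈ S, close m x y ∧ ¬ tube F h k x y

/-- `F` is right-expansive along `h` relative to `S`. -/
def rightExpansive (F : (ℤ → A) → (ℤ → A)) (S : Set (ℤ → A)) (h : ℕ → ℤ) : Prop :=
  ∃ k : ℕ, ∀ x ∈ S, ∀ y ∈ S, (∃ i : ℤ, 0 ≤ i ∧ x i ≠ y i) →
    ∀ z ∈ S, ¬ (tube F h k x z ∧ tube F h k y z)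

/-- `F` is left-expansive along `h` relative to `S`. -/
def leftExpansive (F : (ℤ → A) → (ℤ → A)) (S : Set (ℤ → A)) (h : ℕ → ℤ) : Prop :=
  ∃ k : ℕ, ∀ x ∈ S, ∀ y ∈ S, (∃ i : ℤ, i ≤ 0 ∧ x i ≠ y i) →
    ∀ z ∈ S, ¬ (tube F h k x z ∧ tube F h k y z)

/-- Curves with bounded variation. -/
def BV (h : ℕ → ℤ) : Prop := ∃ M : ℤ, 0 < M ∧ ∀ n : ℕ, |h (n + 1) - h n| ≤ M

/-- The preorder `h ≾ k` on curves. -/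
def precsim (h k : ℕ → ℤ) : Prop := ∃ M : ℤ, 0 < M ∧ ∀ n : ℕ, h n ≤ k n + M

/-- The equivalence `h ∼ k` on curves. -/
def simEq (h k : ℕ → ℤ) : Prop := ∃ M : ℤ, 0 < M ∧ ∀ n : ℕ, k n - M ≤ h n ∧ h n ≤ k n + M

/-- The word `u` belongs to the language of `S`. -/
def inLang (S : Set (ℤ → A)) (u : List A) : Prop := ∃ x ∈ S, x ∈ cylAt u 0

/-- Transitivity of a subshift, expressed on its language. -/
def transitiveSubshift (S : Set (ℤ → A)) : Prop :=
  ∀ u v : List A, inLang S u → inLang S v → ∃ w : List A, inLang S (u ++ w ++ v)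

/-- `u` is a blocking word along `h` for the CA `F` of neighborhood `⟦r,s⟧`,
relative to the subshift `S`. -/
def blockingWord (F : (ℤ → A) → (ℤ → A)) (S : Set (ℤ → A)) (h : ℕ → ℤ) (r s : ℤ)
    (u : List A) : Prop :=
  inLang S u ∧
  ∃ e : ℕ, 0 < e ∧
    (∀ n : ℕ, |h (n + 1) - h n| + s < (e : ℤ) ∧ |h (n + 1) - h n| - r < (e : ℤ)) ∧
    (e : ℤ) ≤ u.length ∧
    ∃ p : ℤ, {q : ℤ × ℕ | h q.2 ≤ q.1 ∧ q.1 < h q.2 + (e : ℤ)} ⊆ consSet F (S ∩ cylAt u p)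

end Prelude
section AuxS
variable {A : Type*}

lemma shiftZ_comm (F : (ℤ → A) → (ℤ → A)) (hF : ∀ x, F (shift x) = shift (F x))
    (c : ℤ) (x : ℤ → A) : F (fun i => x (i + c)) = fun i => F x (i + c) := by
  induction c using Int.induction_on with
  | zero => simp
  | succ k ih =>
    have h1 : (fun i => x (i + ((k : ℤ) + 1))) = shift (fun i => x (i + k)) := by
      funext i; exact congrArg x (by ring)
    rw [h1, hF, ih]
    funext i
    show F x (i + 1 + (k:ℤ)) = F x (i + ((k:ℤ) + 1))
    exact congrArg (F x) (by ring)
  | pred k ih =>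
    have h1 : (fun i => x (i + (-(k : ℤ)))) = shift (fun i => x (i + (-(k : ℤ) - 1))) := by
      funext i
      show x (i + (-(k:ℤ))) = x (i + 1 + (-(k:ℤ) - 1))
      exact congrArg x (by ring)
    rw [h1, hF] at ih
    funext i
    have := congrFun ih (i - 1)
    simp only [shift] at this
    calc F (fun i => x (i + (-(k:ℤ) - 1))) i
        = F (fun i => x (i + (-(k:ℤ) - 1))) (i - 1 + 1) := by norm_num
      _ = F x (i - 1 + -(k:ℤ)) := this
      _ = F x (i + (-(k:ℤ) - 1)) := congrArg (F x) (by ring)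

lemma local_at (F : (ℤ → A) → (ℤ → A)) (r s : ℤ) (hF : IsCA F r s) (x y : ℤ → A) (c : ℤ)
    (h : ∀ i : ℤ, r ≤ i → i ≤ s → x (i + c) = y (i + c)) : F x c = F y c := by
  have hx := shiftZ_comm F hF.1 c x
  have hy := shiftZ_comm F hF.1 c y
  have h0 := hF.2 (fun i => x (i + c)) (fun i => y (i + c)) h
  have e1 : F (fun i => x (i + c)) 0 = F x c := by rw [hx]; simp
  have e2 : F (fun i => y (i + c)) 0 = F y c := by rw [hy]; simp
  rw [← e1, ← e2, h0]

lemma cone (F : (ℤ → A) → (ℤ → A)) (r s W : ℤ) (hF : IsCA F r s)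
    (hW : ∀ i : ℤ, r ≤ i → i ≤ s → |i| ≤ W) (hW0 : 0 ≤ W) :
    ∀ t : ℕ, ∀ x y : ℤ → A, ∀ c : ℤ,
      (∀ i : ℤ, |i - c| ≤ W * t → x i = y i) → F^[t] x c = F^[t] y c := by
  intro t
  induction t with
  | zero => intro x y c h; simpa using h c (by simp)
  | succ t ih =>
    intro x y c h
    rw [Function.iterate_succ_apply, Function.iterate_succ_apply]
    apply ih
    intro i hi
    apply local_at F r s hF
    intro j hj1 hj2
    apply h
    have h1 := hW j hj1 hj2
    have h2 : |j + i - c| ≤ |j| + |i - c| := by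
      have := abs_add_le j (i - c)
      have e : j + (i - c) = j + i - c := by ring
      rwa [e] at this
    have e3 : W * ((t : ℤ) + 1) = W * t + W := by ring
    push_cast
    calc |j + i - c| ≤ |j| + |i - c| := h2
      _ ≤ W + W * t := by linarith
      _ = W * ((t:ℤ) + 1) := by ring

lemma periodic_F (F : (ℤ → A) → (ℤ → A)) (hFs : ∀ x, F (shift x) = shift (F x)) (p : ℤ)
    (z : ℤ → A) (hz : ∀ i, z (i + p) = z i) : ∀ i, F z (i + p) = F z i := by
  have h := shiftZ_comm F hFs p z
  have hz' : (fun i => z (i + p)) = z := funext hz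
  rw [hz'] at h
  intro i
  exact (congrFun h i).symm

lemma periodic_iter (F : (ℤ → A) → (ℤ → A)) (hFs : ∀ x, F (shift x) = shift (F x)) (p : ℤ)
    (z : ℤ → A) (hz : ∀ i, z (i + p) = z i) : ∀ n : ℕ, ∀ i, F^[n] z (i + p) = F^[n] z i := by
  intro n
  induction n with
  | zero => simpa using hz
  | succ n ih =>
    intro i
    rw [Function.iterate_succ_apply']
    exact periodic_F F hFs p _ ih i

lemma periodic_zsmul (p : ℤ) (z : ℤ → A) (hz : ∀ i, z (i + p) = z i) :
    ∀ k : ℤ, ∀ i, z (i + k * p) = z i := by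
  intro k
  induction k using Int.induction_on with
  | zero => simp
  | succ k ih =>
    intro i
    calc z (i + ((k:ℤ) + 1) * p) = z ((i + k * p) + p) := congrArg z (by ring)
      _ = z (i + k * p) := hz _
      _ = z i := ih i
  | pred k ih =>
    intro i
    have h1 : z (i + (-(k:ℤ) - 1) * p + p) = z (i + (-(k:ℤ) - 1) * p) := hz _
    calc z (i + (-(k:ℤ) - 1) * p) = z (i + (-(k:ℤ) - 1) * p + p) := h1.symm
      _ = z (i + (-(k:ℤ)) * p) := congrArg z (by ring)
      _ = z i := ih i

lemma exists_period [Fintype A] (F : (ℤ → A) → (ℤ → A))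
    (hFs : ∀ x, F (shift x) = shift (F x)) (hinj : Function.Injective F)
    (p : ℕ) (hp : 0 < p) (z : ℤ → A) (hz : ∀ i, z (i + (p : ℤ)) = z i) :
    ∃ T : ℕ, 0 < T ∧ F^[T] z = z := by
  set P : Set (ℤ → A) := {w | ∀ i, w (i + (p : ℤ)) = w i} with hP
  have hmem : ∀ n : ℕ, F^[n] z ∈ P := fun n => periodic_iter F hFs _ z hz n
  have hfin : P.Finite := by
    have hinjOn : Set.InjOn (fun w => fun j : Fin p => w ((j : ℕ) : ℤ)) P := by
      intro w hw v hv h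
      funext i
      have key : ∀ w : ℤ → A, w ∈ P → w i = w (((i % p).toNat : ℤ)) := by
        intro w hw
        have h1 := periodic_zsmul (p : ℤ) w hw (i / p) (i % p)
        have h2 : i % p + i / p * p = i := Int.emod_add_ediv_mul i p
        have h3 : (0:ℤ) < p := by exact_mod_cast hp
        have h4 : ((i % p).toNat : ℤ) = i % p :=
          Int.toNat_of_nonneg (Int.emod_nonneg i (by omega))
        rw [h2] at h1
        rw [h4, ← h1]
      have hlt : (i % p).toNat < p := by
        have h3 : (0:ℤ) < p := by exact_mod_cast hp
        have := Int.emod_lt_of_pos i h3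
        have := Int.emod_nonneg i (show (p:ℤ) ≠ 0 by omega)
        omega
      rw [key w hw, key v hv]
      exact congrFun h ⟨(i % p).toNat, hlt⟩
    exact Set.Finite.of_finite_image (Set.toFinite _) hinjOn
  have hnotinj : ¬ Function.Injective (fun n : ℕ => F^[n] z) := by
    intro hI
    exact (Set.infinite_of_injective_forall_mem hI hmem) hfin
  rw [Function.not_injective_iff] at hnotinj
  obtain ⟨i, j, hij, hne⟩ := hnotinj
  rcases Nat.lt_or_ge i j with h | h
  · refine ⟨j - i, by omega, ?_⟩
    have : F^[i + (j - i)] z = F^[i] (F^[j - i] z) := Function.iterate_add_apply F i (j - i) z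
    have hj : i + (j - i) = j := by omega
    rw [hj] at this
    have h5 := hij.trans this
    exact ((Function.Injective.iterate hinj i) h5).symm
  · have hlt : j < i := by omega
    refine ⟨i - j, by omega, ?_⟩
    have : F^[j + (i - j)] z = F^[j] (F^[i - j] z) := Function.iterate_add_apply F j (i - j) z
    have hj : j + (i - j) = i := by omega
    rw [hj] at this
    have h5 := hij.symm.trans this
    exact ((Function.Injective.iterate hinj j) h5).symm

lemma iterate_mul_fix (F : (ℤ → A) → (ℤ → A)) (T : ℕ) (z : ℤ → A) (hT : F^[T] z = z) :
    ∀ k : ℕ, F^[k * T] z = z := by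
  intro k
  induction k with
  | zero => simp
  | succ k ih =>
    have : (k + 1) * T = k * T + T := by ring
    rw [this, Function.iterate_add_apply, hT, ih]

end AuxS
/-- Two-sided consequences of a set of configurations for a reversible CA with
inverse `G`. -/
def consZ {A : Type*} (F G : (ℤ → A) → (ℤ → A)) (X : Set (ℤ → A)) : Set (ℤ × ℤ) :=
  {q | ∀ x ∈ X, ∀ y ∈ X,
    if 0 ≤ q.2 then F^[q.2.toNat] x q.1 = F^[q.2.toNat] y q.1
    else G^[(-q.2).toNat] x q.1 = G^[(-q.2).toNat] y q.1}

/-- for a reversible CA, a rational-slope line contained in the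
positive consequences of `u` extends to the full bi-infinite line in the
two-sided consequences. -/
theorem stmt16 {A : Type*} [Fintype A]
    (F G : (ℤ → A) → (ℤ → A)) (r s r' s' : ℤ)
    (hF : IsCA F r s) (hG : IsCA G r' s')
    (hinv₁ : Function.LeftInverse G F) (hinv₂ : Function.RightInverse G F)
    (u : List A) (x₀ : ℤ) (t₀ : ℕ) (a : ℤ) (b : ℕ) (hb : 1 ≤ b)
    (hline : ∀ n : ℕ, ((x₀ + (n : ℤ) * a, t₀ + n * b) : ℤ × ℕ) ∈
      consSet F (cylAt u 0)) :
    ∀ n : ℤ, ((x₀ + n * a, (t₀ : ℤ) + n * (b : ℤ)) : ℤ × ℤ) ∈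
      consZ F G (cylAt u 0) := by
  intro n
  simp only [consZ, Set.mem_setOf_eq]
  intro x hx y hy
  set c : ℤ := x₀ + n * a with hc
  set t : ℤ := (t₀ : ℤ) + n * b with ht
  set W : ℤ := |r| + |s| + |r'| + |s'| + 1 with hWdef
  have habs := abs_nonneg r
  have habs2 := abs_nonneg s
  have habs3 := abs_nonneg r'
  have habs4 := abs_nonneg s'
  have hW0 : (0:ℤ) ≤ W := by simp only [hWdef]; linarith
  have hWF : ∀ i : ℤ, r ≤ i → i ≤ s → |i| ≤ W := by
    intro i h1 h2
    have := neg_abs_le r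
    have := le_abs_self s
    rw [abs_le]; constructor <;> simp only [hWdef] <;> linarith
  have hWG : ∀ i : ℤ, r' ≤ i → i ≤ s' → |i| ≤ W := by
    intro i h1 h2
    have := neg_abs_le r'
    have := le_abs_self s'
    rw [abs_le]; constructor <;> simp only [hWdef] <;> linarith
  set τ : ℕ := t.natAbs with hτ
  obtain ⟨N, hN1, hN2⟩ : ∃ N : ℕ, (|c| + W * τ ≤ (N : ℤ)) ∧ u.length ≤ N := by
    have hnn : (0:ℤ) ≤ |c| + W * τ := by positivity
    refine ⟨(|c| + W * τ).toNat + u.length, ?_, by omega⟩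
    push_cast
    rw [Int.toNat_of_nonneg hnn]
    linarith [Int.natCast_nonneg u.length]
  set p : ℕ := 2 * N + 1 with hp
  set wrap : ℤ → ℤ := fun i => (i + N) % p - N with hwrap
  have hwrap_per : ∀ i : ℤ, wrap (i + (p : ℤ)) = wrap i := by
    intro i
    simp only [hwrap]
    have e : i + (p:ℤ) + N = (i + N) + (p:ℤ) * 1 := by ring
    rw [e, Int.add_mul_emod_self_left]
  have hwrap_id : ∀ i : ℤ, |i| ≤ (N : ℤ) → wrap i = i := by
    intro i hi
    rw [abs_le] at hi
    simp only [hwrap]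
    have h1 : (0:ℤ) ≤ i + N := by omega
    have h2 : i + (N:ℤ) < p := by simp only [hp]; push_cast; omega
    rw [Int.emod_eq_of_lt h1 h2]
    ring
  set x' : ℤ → A := fun i => x (wrap i) with hx'def
  set y' : ℤ → A := fun i => y (wrap i) with hy'def
  have hx'per : ∀ i, x' (i + (p : ℤ)) = x' i := fun i => congrArg x (hwrap_per i)
  have hy'per : ∀ i, y' (i + (p : ℤ)) = y' i := fun i => congrArg y (hwrap_per i)
  have hx'agree : ∀ i : ℤ, |i| ≤ (N : ℤ) → x' i = x i := fun i h => congrArg x (hwrap_id i h)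
  have hy'agree : ∀ i : ℤ, |i| ≤ (N : ℤ) → y' i = y i := fun i h => congrArg y (hwrap_id i h)
  have hcylx : x' ∈ cylAt u 0 := by
    intro i
    have hi := i.isLt
    have hb : |(0:ℤ) + ((i:ℕ):ℤ)| ≤ (N:ℤ) := by
      rw [abs_le]; constructor <;> push_cast <;> omega
    rw [hx'agree _ hb]
    exact hx i
  have hcyly : y' ∈ cylAt u 0 := by
    intro i
    have hi := i.isLt
    have hb : |(0:ℤ) + ((i:ℕ):ℤ)| ≤ (N:ℤ) := by
      rw [abs_le]; constructor <;> push_cast <;> omega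
    rw [hy'agree _ hb]
    exact hy i
  have hFinj : Function.Injective F := hinv₁.injective
  obtain ⟨Tx, hTx0, hTx⟩ := exists_period F hF.1 hFinj p (by omega) x' hx'per
  obtain ⟨Ty, hTy0, hTy⟩ := exists_period F hF.1 hFinj p (by omega) y' hy'per
  set T : ℕ := Tx * Ty with hT
  have hTfixx : ∀ k : ℕ, F^[k * T] x' = x' := by
    intro k
    have : k * T = (k * Ty) * Tx := by rw [hT]; ring
    rw [this]
    exact iterate_mul_fix F Tx x' hTx (k * Ty)
  have hTfixy : ∀ k : ℕ, F^[k * T] y' = y' := by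
    intro k
    have : k * T = (k * Tx) * Ty := by rw [hT]; ring
    rw [this]
    exact iterate_mul_fix F Ty y' hTy (k * Tx)
  set K : ℕ := n.natAbs + 1 with hK
  set d : ℕ := T * p * K with hd
  have hT1 : 1 ≤ T := Nat.one_le_iff_ne_zero.mpr (by positivity)
  have hdK : K ≤ d := by
    have : 1 ≤ T * p := Nat.one_le_iff_ne_zero.mpr (by positivity)
    calc K = 1 * K := (one_mul K).symm
      _ ≤ T * p * K := Nat.mul_le_mul_right K this
  set m : ℤ := n + d with hm
  have hm1 : 1 ≤ m := by simp only [hm]; omega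
  set mN : ℕ := m.toNat with hmN
  have hmNZ : (mN : ℤ) = m := Int.toNat_of_nonneg (by omega)
  set e : ℕ := t₀ + mN * b with he
  -- the fixed-point for d * b steps
  have hdbx : F^[d * b] x' = x' := by
    have : d * b = (p * K * b) * T := by rw [hd]; ring
    rw [this]; exact hTfixx (p * K * b)
  have hdby : F^[d * b] y' = y' := by
    have : d * b = (p * K * b) * T := by rw [hd]; ring
    rw [this]; exact hTfixy (p * K * b)
  -- spatial shift identity
  have harg : ∀ z' : ℤ → A, (∀ i, z' (i + (p : ℤ)) = z' i) →
      F^[e] z' (x₀ + (mN : ℤ) * a) = F^[e] z' c := by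
    intro z' hper
    have hper' : ∀ i, F^[e] z' (i + (p:ℤ)) = F^[e] z' i := periodic_iter F hF.1 _ z' hper e
    have h1 := periodic_zsmul (p : ℤ) (F^[e] z') hper' ((T : ℤ) * K * a) c
    have h2 : c + (T : ℤ) * K * a * p = x₀ + (mN : ℤ) * a := by
      rw [hmNZ, hm, hc, hd]
      push_cast
      ring
    rw [h2] at h1
    exact h1
  -- the time identities
  have hkey : ∀ z' : ℤ → A, (∀ i, z' (i + (p : ℤ)) = z' i) → F^[d * b] z' = z' →
      (0 ≤ t → F^[t.toNat] z' c = F^[e] z' (x₀ + (mN : ℤ) * a)) ∧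
      (t < 0 → G^[(-t).toNat] z' c = F^[e] z' (x₀ + (mN : ℤ) * a)) := by
    intro z' hper hfix
    constructor
    · intro ht0
      have hsum : e = t.toNat + d * b := by
        have : ((e : ℕ) : ℤ) = ((t.toNat + d * b : ℕ) : ℤ) := by
          push_cast [Int.toNat_of_nonneg ht0, he]
          rw [hmNZ, hm, ht]
          push_cast
          ring
        exact_mod_cast this
      rw [harg z' hper, hsum, Function.iterate_add_apply, hfix]
    · intro ht0
      have hτe : d * b = (-t).toNat + e := by
        have : ((d * b : ℕ) : ℤ) = (((-t).toNat + e : ℕ) : ℤ) := by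
          push_cast [Int.toNat_of_nonneg (by omega : (0:ℤ) ≤ -t), he]
          rw [hmNZ, hm, ht]
          push_cast
          ring
        exact_mod_cast this
      rw [harg z' hper]
      conv_lhs => rw [← hfix, hτe, Function.iterate_add_apply]
      exact congrFun (Function.LeftInverse.iterate hinv₁ (-t).toNat (F^[e] z')) c
  -- consequence at (x₀ + mN a, t₀ + mN b)
  have hcons := hline mN x' hcylx y' hcyly
  -- agreement within cones
  have hconex : ∀ tt : ℕ, tt = τ → ∀ (FF : (ℤ → A) → (ℤ → A)) (rr ss : ℤ), IsCA FF rr ss →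
      (∀ i : ℤ, rr ≤ i → i ≤ ss → |i| ≤ W) →
      (FF^[tt] x c = FF^[tt] x' c ∧ FF^[tt] y c = FF^[tt] y' c) := by
    intro tt htt FF rr ss hFF hWFF
    constructor
    · apply cone FF rr ss W hFF hWFF hW0
      intro i hi
      rw [htt] at hi
      have h1 : |i| ≤ (N : ℤ) := by
        have h2 := abs_add_le (i - c) c
        have h3 : i - c + c = i := by ring
        rw [h3] at h2
        linarith [abs_nonneg c]
      exact (hx'agree i h1).symm
    · apply cone FF rr ss W hFF hWFF hW0
      intro i hi
      rw [htt] at hi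
      have h1 : |i| ≤ (N : ℤ) := by
        have h2 := abs_add_le (i - c) c
        have h3 : i - c + c = i := by ring
        rw [h3] at h2
        linarith [abs_nonneg c]
      exact (hy'agree i h1).symm
  by_cases ht0 : 0 ≤ t
  · rw [if_pos ht0]
    have htτ : t.toNat = τ := by simp only [hτ]; omega
    obtain ⟨hcx, hcy⟩ := hconex t.toNat htτ F r s hF hWF
    calc F^[t.toNat] x c = F^[t.toNat] x' c := hcx
      _ = F^[e] x' (x₀ + (mN : ℤ) * a) := (hkey x' hx'per hdbx).1 ht0
      _ = F^[e] y' (x₀ + (mN : ℤ) * a) := hcons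
      _ = F^[t.toNat] y' c := ((hkey y' hy'per hdby).1 ht0).symm
      _ = F^[t.toNat] y c := hcy.symm
  · rw [if_neg ht0]
    have ht0' : t < 0 := by omega
    have htτ : (-t).toNat = τ := by simp only [hτ]; omega
    obtain ⟨hcx, hcy⟩ := hconex (-t).toNat htτ G r' s' hG hWG
    calc G^[(-t).toNat] x c = G^[(-t).toNat] x' c := hcx
      _ = F^[e] x' (x₀ + (mN : ℤ) * a) := (hkey x' hx'per hdbx).2 ht0'
      _ = F^[e] y' (x₀ + (mN : ℤ) * a) := hcons
      _ = G^[(-t).toNat] y' c := ((hkey y' hy'per hdby).2 ht0').symm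
      _ = G^[(-t).toNat] y c := hcy.symm
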